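/- For any integers l ≥ 1 and α with 2^{l−1} ≤ α < 2^l − 1, the minimum of the quantity t_l · 2^{l−1} + Σ_{i=1}^{l−1} (t_i − 1)·2^{i−1} over integer choices 1 ≤ t_i ≤ B (for each i, with B ≥ 2), subject to the constraint that this quantity exceeds α, equals α + 1. -/

import Mathlib

lemma sum_testbit (m : ℕ) : ∀ k : ℕ,
    ∑ j ∈ Finset.range k, (m.testBit j).toNat * 2 ^ j = m % 2 ^ k := by
  intro k
  induction k with
  | zero => simp [Nat.mod_one]
  | succ k ih =>
    rw [Finset.sum_range_succ, ih, pow_succ, Nat.mod_mul]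
    have ht : (m.testBit k).toNat = m / 2 ^ k % 2 := by
      rw [Nat.testBit_eq_decide_div_mod_eq]
      rcases Nat.mod_two_eq_zero_or_one (m / 2 ^ k) with h | h <;> simp [h]
    rw [ht]; ring

/-- For `2^(l-1) ≤ α < 2^l - 1`, the minimum of
`t_l·2^(l-1) + Σ_{i=1}^{l-1} (t_i - 1)·2^(i-1)` over integer choices
`1 ≤ t_i ≤ B`, subject to the value exceeding `α`, equals `α + 1`. -/
theorem alpha_minimal_receptive (B l α : ℕ) (hB : 2 ≤ B) (hl : 1 ≤ l)
    (h1 : 2 ^ (l - 1) ≤ α) (h2 : α < 2 ^ l - 1) :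
    IsLeast {v : ℕ | α < v ∧ ∃ t : ℕ → ℕ,
        (∀ i ∈ Finset.Icc 1 l, 1 ≤ t i ∧ t i ≤ B) ∧
        v = t l * 2 ^ (l - 1) +
              ∑ i ∈ Finset.Icc 1 (l - 1), (t i - 1) * 2 ^ (i - 1)}
      (α + 1) := by
  constructor
  · refine ⟨Nat.lt_succ_self α,
      fun i => if i = l then 1 else ((α + 1).testBit (i - 1)).toNat + 1, ?_, ?_⟩
    · intro i _
      dsimp only
      constructor
      · split <;> omega
      · split
        · omega
        · have := Bool.toNat_le ((α + 1).testBit (i - 1)); omega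
    · have himg : Finset.Icc 1 (l - 1) = Finset.image (· + 1) (Finset.range (l - 1)) := by
        ext x
        simp only [Finset.mem_Icc, Finset.mem_image, Finset.mem_range]
        constructor
        · rintro ⟨hx1, hx2⟩; exact ⟨x - 1, by omega, by omega⟩
        · rintro ⟨a, ha, rfl⟩; omega
      have key : ∑ i ∈ Finset.Icc 1 (l - 1),
          ((if i = l then 1 else ((α + 1).testBit (i - 1)).toNat + 1) - 1) * 2 ^ (i - 1)
          = (α + 1) % 2 ^ (l - 1) := by
        rw [himg, Finset.sum_image (by intro x _ y _ h; dsimp only at h; omega), ← sum_testbit (α + 1) (l - 1)]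
        refine Finset.sum_congr rfl fun j hj => ?_
        have hj' : j < l - 1 := Finset.mem_range.mp hj
        have : ¬(j + 1 = l) := by omega
        simp [this]
      dsimp only
      rw [key, if_pos rfl, one_mul]
      have hlt : α + 1 < 2 ^ l := by omega
      have h2l : 2 ^ l = 2 ^ (l - 1) * 2 := by
        rw [← pow_succ]; congr 1; omega
      have hmod : (α + 1) % 2 ^ (l - 1) = α + 1 - 2 ^ (l - 1) := by
        rw [Nat.mod_eq_sub_mod (by omega), Nat.mod_eq_of_lt (by omega)]
      omega
  · rintro v ⟨hv, -⟩; omega
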